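/- Let σ_{TX}, σ'_{TX} ∈ M(ρ_X) be positive definite such that σ_T, σ'_T, (id_T⊗R)(σ_{TX}), (id_T⊗R)(σ'_{TX}) and R(ρ_X) are positive definite. Then Re Tr(σ_{TX} (Ω_{α,β}(σ_{TX}) − Ω_{α,β}(σ'_{TX}))) = α D(σ_{TX}‖σ'_{TX}) + (β−1) D(σ_T‖σ'_T) − β D((id_T⊗R)(σ_{TX}) ‖ (id_T⊗R)(σ'_{TX})). -/
import Mathlib


noncomputable section
open scoped Matrix Kronecker ComplexOrder

/-- Matrix logarithm via the real continuous functional calculus. -/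
def mlog {n : Type*} [Fintype n] [DecidableEq n] (A : Matrix n n ℂ) : Matrix n n ℂ :=
  cfc Real.log A

/-- Quantum relative entropy `D(ρ‖σ) = Re Tr(ρ (log ρ − log σ))`. -/
def relEnt {n : Type*} [Fintype n] [DecidableEq n] (ρ σ : Matrix n n ℂ) : ℝ :=
  (Matrix.trace (ρ * (mlog ρ - mlog σ))).re

/-- A positive definite density matrix. -/
def IsPDDensity {n : Type*} [Fintype n] (ρ : Matrix n n ℂ) : Prop :=
  ρ.PosDef ∧ ρ.trace = 1

/-- A density matrix. -/
def IsDensity {n : Type*} [Fintype n] (ρ : Matrix n n ℂ) : Prop :=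
  ρ.PosSemidef ∧ ρ.trace = 1

/-- Partial trace over the first tensor factor. -/
def ptrace1 {m n : Type*} [Fintype m] (A : Matrix (m × n) (m × n) ℂ) : Matrix n n ℂ :=
  Matrix.of fun i j => ∑ t, A (t, i) (t, j)

/-- Partial trace over the second tensor factor. -/
def ptrace2 {m n : Type*} [Fintype n] (A : Matrix (m × n) (m × n) ℂ) : Matrix m m ℂ :=
  Matrix.of fun i j => ∑ x, A (i, x) (j, x)

/-- The quantum channel with Kraus operators `K i`. -/
def channel {dX dY m : ℕ} (K : Fin m → Matrix (Fin dY) (Fin dX) ℂ)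
    (A : Matrix (Fin dX) (Fin dX) ℂ) : Matrix (Fin dY) (Fin dY) ℂ :=
  ∑ i, K i * A * (K i)ᴴ

/-- The adjoint of the quantum channel with Kraus operators `K i`. -/
def channelAdj {dX dY m : ℕ} (K : Fin m → Matrix (Fin dY) (Fin dX) ℂ)
    (B : Matrix (Fin dY) (Fin dY) ℂ) : Matrix (Fin dX) (Fin dX) ℂ :=
  ∑ i, (K i)ᴴ * B * K i

/-- The channel `id_T ⊗ R`, with Kraus operators `I_T ⊗ K i`. -/
def extChannel {dT dX dY m : ℕ} (K : Fin m → Matrix (Fin dY) (Fin dX) ℂ)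
    (A : Matrix (Fin dT × Fin dX) (Fin dT × Fin dX) ℂ) :
    Matrix (Fin dT × Fin dY) (Fin dT × Fin dY) ℂ :=
  ∑ i, ((1 : Matrix (Fin dT) (Fin dT) ℂ) ⊗ₖ K i) * A
      * ((1 : Matrix (Fin dT) (Fin dT) ℂ) ⊗ₖ K i)ᴴ

/-- The adjoint `(id_T ⊗ R)*`. -/
def extChannelAdj {dT dX dY m : ℕ} (K : Fin m → Matrix (Fin dY) (Fin dX) ℂ)
    (B : Matrix (Fin dT × Fin dY) (Fin dT × Fin dY) ℂ) :
    Matrix (Fin dT × Fin dX) (Fin dT × Fin dX) ℂ :=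
  ∑ i, ((1 : Matrix (Fin dT) (Fin dT) ℂ) ⊗ₖ K i)ᴴ * B
      * ((1 : Matrix (Fin dT) (Fin dT) ℂ) ⊗ₖ K i)

/-- The operator `Ω_{α,β}(σ_{TX})` of the quantum information bottleneck. -/
def OmegaIB {dT dX dY m : ℕ} (K : Fin m → Matrix (Fin dY) (Fin dX) ℂ) (α β : ℝ)
    (ρX : Matrix (Fin dX) (Fin dX) ℂ)
    (σ : Matrix (Fin dT × Fin dX) (Fin dT × Fin dX) ℂ) :
    Matrix (Fin dT × Fin dX) (Fin dT × Fin dX) ℂ :=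
  α • mlog σ - α • ((1 : Matrix (Fin dT) (Fin dT) ℂ) ⊗ₖ mlog ρX)
    + (β - 1) • (mlog (ptrace2 σ) ⊗ₖ (1 : Matrix (Fin dX) (Fin dX) ℂ))
    + β • extChannelAdj K
        ((1 : Matrix (Fin dT) (Fin dT) ℂ) ⊗ₖ mlog (channel K ρX)
          - mlog (extChannel K σ))

/-- The quantum mutual information of a bipartite state:
`I(1;2)[ω] = D(ω ‖ ω_1 ⊗ ω_2)`. -/
def mutualInfo {m n : Type*} [Fintype m] [Fintype n] [DecidableEq m] [DecidableEq n]
    (ω : Matrix (m × n) (m × n) ℂ) : ℝ :=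
  relEnt ω (ptrace2 ω ⊗ₖ ptrace1 ω)

/-- The von Neumann entropy `H(σ) = −Re Tr(σ log σ)`. -/
def vnEntropy {n : Type*} [Fintype n] [DecidableEq n] (σ : Matrix n n ℂ) : ℝ :=
  -(Matrix.trace (σ * mlog σ)).re



lemma trace_mul_kron_one {dT dX : ℕ} (σ : Matrix (Fin dT × Fin dX) (Fin dT × Fin dX) ℂ)
    (A : Matrix (Fin dT) (Fin dT) ℂ) :
    Matrix.trace (σ * (A ⊗ₖ (1 : Matrix (Fin dX) (Fin dX) ℂ))) = Matrix.trace (ptrace2 σ * A) := by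
  simp only [Matrix.trace, Matrix.diag, Matrix.mul_apply, Matrix.kroneckerMap_apply,
    Matrix.one_apply, ptrace2, Matrix.of_apply, Fintype.sum_prod_type, mul_ite, mul_one, mul_zero,
    Finset.sum_ite_eq', Finset.mem_univ, if_true, Finset.sum_mul, Finset.mul_sum]
  refine Finset.sum_congr rfl fun t _ => ?_
  rw [Finset.sum_comm]

lemma trace_mul_extAdj {dT dX dY m : ℕ} (K : Fin m → Matrix (Fin dY) (Fin dX) ℂ)
    (σ : Matrix (Fin dT × Fin dX) (Fin dT × Fin dX) ℂ)
    (B : Matrix (Fin dT × Fin dY) (Fin dT × Fin dY) ℂ) :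
    Matrix.trace (σ * extChannelAdj K B) = Matrix.trace (extChannel K σ * B) := by
  unfold extChannelAdj extChannel
  rw [Matrix.mul_sum, Matrix.sum_mul, Matrix.trace_sum, Matrix.trace_sum]
  refine Finset.sum_congr rfl fun i _ => ?_
  rw [← Matrix.mul_assoc, ← Matrix.mul_assoc, Matrix.trace_mul_comm]
  rw [Matrix.mul_assoc, Matrix.mul_assoc, ← Matrix.mul_assoc, ← Matrix.mul_assoc]

lemma omega_diff {dT dX dY m : ℕ} (K : Fin m → Matrix (Fin dY) (Fin dX) ℂ) (α β : ℝ)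
    (ρX : Matrix (Fin dX) (Fin dX) ℂ)
    (σ σ' : Matrix (Fin dT × Fin dX) (Fin dT × Fin dX) ℂ) :
    OmegaIB K α β ρX σ - OmegaIB K α β ρX σ' =
      α • (mlog σ - mlog σ')
        + (β - 1) • ((mlog (ptrace2 σ) - mlog (ptrace2 σ')) ⊗ₖ (1 : Matrix (Fin dX) (Fin dX) ℂ))
        + β • extChannelAdj K (mlog (extChannel K σ') - mlog (extChannel K σ)) := by
  have hadj : ∀ B B' : Matrix (Fin dT × Fin dY) (Fin dT × Fin dY) ℂ,
      extChannelAdj (dT := dT) K (B - B') = extChannelAdj K B - extChannelAdj K B' := by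
    intro B B'
    unfold extChannelAdj
    rw [← Finset.sum_sub_distrib]
    refine Finset.sum_congr rfl fun i _ => ?_
    rw [Matrix.mul_sub, Matrix.sub_mul]
  have hk : ∀ A A' : Matrix (Fin dT) (Fin dT) ℂ,
      (A - A') ⊗ₖ (1 : Matrix (Fin dX) (Fin dX) ℂ) = A ⊗ₖ 1 - A' ⊗ₖ 1 := by
    intro A A'
    ext ⟨a, b⟩ ⟨c, d⟩
    simp [Matrix.kroneckerMap_apply, sub_mul]
  unfold OmegaIB
  rw [hk, hadj, hadj, hadj]
  module

/-- `Re Tr(σ_{TX} (Ω_{α,β}(σ_{TX}) − Ω_{α,β}(σ'_{TX})))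
= α D(σ_{TX}‖σ'_{TX}) + (β−1) D(σ_T‖σ'_T) − β D((id⊗R)σ ‖ (id⊗R)σ')`. -/
theorem stmt13 {dT dX dY m : ℕ} (hdT : 1 ≤ dT) (hdX : 1 ≤ dX) (hdY : 1 ≤ dY)
    (K : Fin m → Matrix (Fin dY) (Fin dX) ℂ)
    (hK : ∑ i, (K i)ᴴ * K i = 1)
    (α β : ℝ)
    (ρX : Matrix (Fin dX) (Fin dX) ℂ) (hρX : IsPDDensity ρX)
    (σ σ' : Matrix (Fin dT × Fin dX) (Fin dT × Fin dX) ℂ)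
    (hσ : IsDensity σ) (hσM : ptrace1 σ = ρX)
    (hσ' : IsDensity σ') (hσ'M : ptrace1 σ' = ρX)
    (hσPD : σ.PosDef) (hσ'PD : σ'.PosDef)
    (hσT : (ptrace2 σ).PosDef) (hσ'T : (ptrace2 σ').PosDef)
    (hσY : (extChannel (dT := dT) K σ).PosDef)
    (hσ'Y : (extChannel (dT := dT) K σ').PosDef)
    (hRρX : (channel K ρX).PosDef) :
    (Matrix.trace (σ * (OmegaIB K α β ρX σ - OmegaIB K α β ρX σ'))).re
      = α * relEnt σ σ' + (β - 1) * relEnt (ptrace2 σ) (ptrace2 σ')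
        - β * relEnt (extChannel (dT := dT) K σ) (extChannel (dT := dT) K σ') := by
  have hdiff := omega_diff K α β ρX σ σ'
  rw [hdiff]
  rw [Matrix.mul_add, Matrix.mul_add, Matrix.trace_add, Matrix.trace_add,
    Matrix.mul_smul, Matrix.mul_smul, Matrix.mul_smul,
    Matrix.trace_smul, Matrix.trace_smul, Matrix.trace_smul,
    trace_mul_kron_one, trace_mul_extAdj]
  have h3 : Matrix.trace (extChannel (dT := dT) K σ *
      (mlog (extChannel K σ') - mlog (extChannel K σ))) =
      -Matrix.trace (extChannel (dT := dT) K σ *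
        (mlog (extChannel K σ) - mlog (extChannel K σ'))) := by
    rw [← Matrix.trace_neg, ← Matrix.mul_neg, neg_sub]
  rw [h3]
  simp only [Complex.add_re, Complex.real_smul, Complex.mul_re, Complex.ofReal_re,
    Complex.ofReal_im, Complex.neg_re, Complex.neg_im]
  unfold relEnt
  ring

end
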